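/- Let E be a complete normed space and f ∈ 𝓡_m([a,b], E), meaning that for every φ ∈ D⁻[a,b] the Riemann integral ∫_a^b φ(t) f(t) dt exists as a limit of Riemann sums. Define F(t) = ∫_a^t f(s) ds. Then F ∈ 𝓡_m([a,b], E) and for every φ ∈ D⁻[a,b], ∫_a^b φ(t) F(t) dt = ∫_a^b (∫_t^b φ(s) ds) f(t) dt. -/

import Mathlib

open MeasureTheory

/-- `f` has Riemann integral `I` over `[a,b]`: Riemann sums over tagged partitions
converge to `I` as the mesh tends to `0`. -/
def HasRiemannIntegral {E : Type*} [NormedAddCommGroup E] [NormedSpace ℝ E]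
    (f : ℝ → E) (a b : ℝ) (I : E) : Prop :=
  ∀ ε : ℝ, 0 < ε → ∃ δ : ℝ, 0 < δ ∧ ∀ (n : ℕ) (t ξ : ℕ → ℝ),
    0 < n → t 0 = a → t n = b →
    (∀ i < n, t i < t (i + 1)) →
    (∀ i < n, t (i + 1) - t i < δ) →
    (∀ i < n, ξ i ∈ Set.Icc (t i) (t (i + 1))) →
    ‖(∑ i ∈ Finset.range n, (t (i + 1) - t i) • f (ξ i)) - I‖ < ε

/-- `φ ∈ D⁻[a,b]`: left-continuous on `(a,b]` with right-hand limits on `[a,b)`. -/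
def MemDminus (a b : ℝ) (φ : ℝ → ℝ) : Prop :=
  (∀ x ∈ Set.Ioc a b, Filter.Tendsto φ (nhdsWithin x (Set.Iio x)) (nhds (φ x))) ∧
  (∀ x ∈ Set.Ico a b, ∃ L : ℝ, Filter.Tendsto φ (nhdsWithin x (Set.Ioi x)) (nhds L))

namespace RF

/-- tagged partition of `[a,b]` (without mesh condition) -/
def IsPart (a b : ℝ) (n : ℕ) (t ξ : ℕ → ℝ) : Prop :=
  0 < n ∧ t 0 = a ∧ t n = b ∧ (∀ i < n, t i < t (i + 1)) ∧
    (∀ i < n, ξ i ∈ Set.Icc (t i) (t (i + 1)))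

/-- mesh bound -/
def Msh (δ : ℝ) (n : ℕ) (t : ℕ → ℝ) : Prop := ∀ i < n, t (i + 1) - t i < δ

/-- Riemann sum -/
noncomputable def RS {E : Type*} [NormedAddCommGroup E] [NormedSpace ℝ E]
    (f : ℝ → E) (n : ℕ) (t ξ : ℕ → ℝ) : E :=
  ∑ i ∈ Finset.range n, (t (i + 1) - t i) • f (ξ i)

theorem hri_iff {E : Type*} [NormedAddCommGroup E] [NormedSpace ℝ E]
    (f : ℝ → E) (a b : ℝ) (I : E) :
    HasRiemannIntegral f a b I ↔ ∀ ε : ℝ, 0 < ε → ∃ δ : ℝ, 0 < δ ∧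
      ∀ (n : ℕ) (t ξ : ℕ → ℝ), IsPart a b n t ξ → Msh δ n t → ‖RS f n t ξ - I‖ < ε := by
  constructor
  · intro h ε hε
    obtain ⟨δ, hδ, H⟩ := h ε hε
    exact ⟨δ, hδ, fun n t ξ hp hm => H n t ξ hp.1 hp.2.1 hp.2.2.1 hp.2.2.2.1 hm hp.2.2.2.2⟩
  · intro h ε hε
    obtain ⟨δ, hδ, H⟩ := h ε hε
    exact ⟨δ, hδ, fun n t ξ h1 h2 h3 h4 h5 h6 => H n t ξ ⟨h1, h2, h3, h4, h6⟩ h5⟩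

section Part

variable {a b : ℝ} {n : ℕ} {t ξ : ℕ → ℝ}

theorem part_mono (h : ∀ i < n, t i < t (i + 1)) :
    ∀ {i j : ℕ}, i ≤ j → j ≤ n → t i ≤ t j := by
  intro i j hij hjn
  induction j with
  | zero => simp_all
  | succ m ih =>
    rcases Nat.eq_or_lt_of_le hij with heq | hlt
    · exact heq ▸ le_rfl
    · exact le_trans (ih (Nat.lt_succ_iff.mp hlt) (le_trans (Nat.le_succ m) hjn))
        (h m (Nat.lt_of_succ_le hjn)).le

theorem part_strict_mono (h : ∀ i < n, t i < t (i + 1)) :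
    ∀ {i j : ℕ}, i < j → j ≤ n → t i < t j := by
  intro i j hij hjn
  have : t (i+1) ≤ t j := part_mono h hij hjn
  exact lt_of_lt_of_le (h i (lt_of_lt_of_le hij hjn)) this

theorem part_mem (hp : IsPart a b n t ξ) {i : ℕ} (hi : i ≤ n) : t i ∈ Set.Icc a b := by
  obtain ⟨hn, h0, hb, hs, _⟩ := hp
  exact ⟨h0 ▸ part_mono hs (Nat.zero_le i) hi, hb ▸ part_mono hs hi le_rfl⟩

theorem tag_mem (hp : IsPart a b n t ξ) {i : ℕ} (hi : i < n) : ξ i ∈ Set.Icc a b := by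
  obtain ⟨hξ1, hξ2⟩ := hp.2.2.2.2 i hi
  exact ⟨le_trans (part_mem hp hi.le).1 hξ1, le_trans hξ2 (part_mem hp hi).2⟩

theorem sum_diff (hp : IsPart a b n t ξ) :
    ∑ i ∈ Finset.range n, (t (i + 1) - t i) = b - a := by
  rw [Finset.sum_range_sub (f := t), hp.2.1, hp.2.2.1]

end Part

section Constructions

/-- uniform partition points -/
noncomputable def unif (c d : ℝ) (m : ℕ) : ℕ → ℝ := fun j => c + j * ((d - c) / m)

theorem unif_diff (c d : ℝ) (m : ℕ) (j : ℕ) :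
    unif c d m (j + 1) - unif c d m j = (d - c) / m := by
  simp [unif]; ring

theorem unif_isPart {c d : ℝ} (hcd : c < d) {m : ℕ} (hm : 0 < m) :
    IsPart c d m (unif c d m) (unif c d m) := by
  have hstep : 0 < (d - c) / m := div_pos (sub_pos.mpr hcd) (by exact_mod_cast hm)
  have hs : ∀ i < m, unif c d m i < unif c d m (i + 1) := by
    intro i _
    have := unif_diff c d m i
    linarith
  refine ⟨hm, by simp [unif], ?_, hs, fun i hi => ⟨le_rfl, (hs i hi).le⟩⟩
  have : (m : ℝ) ≠ 0 := by exact_mod_cast hm.ne'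
  simp only [unif]; rw [mul_div_assoc', mul_div_cancel_left₀ _ this]; ring

theorem unif_msh {c d : ℝ} (hcd : c < d) {m : ℕ} (hm : 0 < m) {δ : ℝ}
    (h : (d - c) / m < δ) : Msh δ m (unif c d m) := by
  intro i _; rw [unif_diff]; exact h

theorem exists_unif_nat {c d δ : ℝ} (hcd : c < d) (hδ : 0 < δ) :
    ∃ m : ℕ, 0 < m ∧ (d - c) / m < δ := by
  obtain ⟨m, hm⟩ := exists_nat_gt ((d - c) / δ)
  refine ⟨m + 1, Nat.succ_pos m, ?_⟩
  have hm' : (d - c) / δ < (m + 1 : ℕ) := lt_of_lt_of_le hm (by exact_mod_cast Nat.le_succ m)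
  have hmpos : (0:ℝ) < (m + 1 : ℕ) := by positivity
  rw [div_lt_iff₀ hmpos]
  rw [div_lt_iff₀ hδ] at hm'
  linarith [hm']

/-- concatenated partition points -/
def catT (n₁ : ℕ) (t₁ t₂ : ℕ → ℝ) : ℕ → ℝ := fun i => if i ≤ n₁ then t₁ i else t₂ (i - n₁)

/-- concatenated tags -/
def catX (n₁ : ℕ) (ξ₁ ξ₂ : ℕ → ℝ) : ℕ → ℝ := fun i => if i < n₁ then ξ₁ i else ξ₂ (i - n₁)

variable {a b c : ℝ} {n₁ n₂ : ℕ} {t₁ ξ₁ t₂ ξ₂ : ℕ → ℝ}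

theorem cat_left (h : t₁ n₁ = t₂ 0) {i : ℕ} (hi : i < n₁) :
    catT n₁ t₁ t₂ i = t₁ i ∧ catT n₁ t₁ t₂ (i+1) = t₁ (i+1) ∧ catX n₁ ξ₁ ξ₂ i = ξ₁ i := by
  refine ⟨if_pos hi.le, if_pos hi, if_pos hi⟩

theorem cat_right (h : t₁ n₁ = t₂ 0) {j : ℕ} :
    catT n₁ t₁ t₂ (n₁ + j) = t₂ j ∧ catX n₁ ξ₁ ξ₂ (n₁ + j) = ξ₂ j := by
  constructor
  · rcases Nat.eq_zero_or_pos j with rfl | hj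
    · simpa [catT] using h
    · have : ¬ (n₁ + j ≤ n₁) := by omega
      simp [catT, this]
  · have : ¬ (n₁ + j < n₁) := by omega
    simp [catX, this]

theorem cat_isPart (h₁ : IsPart a c n₁ t₁ ξ₁) (h₂ : IsPart c b n₂ t₂ ξ₂) :
    IsPart a b (n₁ + n₂) (catT n₁ t₁ t₂) (catX n₁ ξ₁ ξ₂) := by
  have hb : t₁ n₁ = t₂ 0 := by rw [h₁.2.2.1, h₂.2.1]
  obtain ⟨hn₁, h10, h1n, h1s, h1t⟩ := h₁
  obtain ⟨hn₂, h20, h2n, h2s, h2t⟩ := h₂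
  have key : ∀ i < n₁ + n₂, catT n₁ t₁ t₂ i < catT n₁ t₁ t₂ (i+1) ∧
      catX n₁ ξ₁ ξ₂ i ∈ Set.Icc (catT n₁ t₁ t₂ i) (catT n₁ t₁ t₂ (i+1)) := by
    intro i hi
    rcases lt_or_ge i n₁ with h | h
    · obtain ⟨e1, e2, e3⟩ := cat_left (ξ₁ := ξ₁) (ξ₂ := ξ₂) hb h
      rw [e1, e2, e3]
      exact ⟨h1s i h, h1t i h⟩
    · obtain ⟨j, rfl⟩ := Nat.exists_eq_add_of_le h
      have hj : j < n₂ := by omega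
      have e1 := (cat_right (ξ₁ := ξ₁) (ξ₂ := ξ₂) hb (j := j)).1
      have e2 : catT n₁ t₁ t₂ (n₁ + j + 1) = t₂ (j+1) := by
        rw [show n₁ + j + 1 = n₁ + (j+1) by ring]
        exact (cat_right (ξ₁ := ξ₁) (ξ₂ := ξ₂) hb).1
      have e3 := (cat_right (ξ₁ := ξ₁) (ξ₂ := ξ₂) hb (j := j)).2
      rw [e1, e2, e3]
      exact ⟨h2s j hj, h2t j hj⟩
  refine ⟨by omega, ?_, ?_, fun i hi => (key i hi).1, fun i hi => (key i hi).2⟩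
  · simp [catT, h10]
  · rw [show n₁ + n₂ = n₁ + n₂ from rfl, (cat_right (ξ₁ := ξ₁) (ξ₂ := ξ₂) hb).1, h2n]

theorem cat_msh {δ : ℝ} (hb : t₁ n₁ = t₂ 0) (m₁ : Msh δ n₁ t₁) (m₂ : Msh δ n₂ t₂) :
    Msh δ (n₁ + n₂) (catT n₁ t₁ t₂) := by
  intro i hi
  rcases lt_or_ge i n₁ with h | h
  · obtain ⟨e1, e2, _⟩ := cat_left (ξ₁ := fun _ => 0) (ξ₂ := fun _ => 0) hb h
    rw [e1, e2]; exact m₁ i h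
  · obtain ⟨j, rfl⟩ := Nat.exists_eq_add_of_le h
    have hj : j < n₂ := by omega
    have e1 := (cat_right (ξ₁ := fun _ => (0:ℝ)) (ξ₂ := fun _ => (0:ℝ)) hb (j := j)).1
    have e2 : catT n₁ t₁ t₂ (n₁ + j + 1) = t₂ (j+1) := by
      rw [show n₁ + j + 1 = n₁ + (j+1) by ring]
      exact (cat_right (ξ₁ := fun _ => (0:ℝ)) (ξ₂ := fun _ => (0:ℝ)) hb).1
    rw [e1, e2]; exact m₂ j hj

theorem cat_RS {E : Type*} [NormedAddCommGroup E] [NormedSpace ℝ E] (f : ℝ → E)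
    (hb : t₁ n₁ = t₂ 0) :
    RS f (n₁ + n₂) (catT n₁ t₁ t₂) (catX n₁ ξ₁ ξ₂) = RS f n₁ t₁ ξ₁ + RS f n₂ t₂ ξ₂ := by
  unfold RS
  rw [Finset.sum_range_add]
  congr 1
  · apply Finset.sum_congr rfl
    intro i hi
    obtain ⟨e1, e2, e3⟩ := cat_left (ξ₁ := ξ₁) (ξ₂ := ξ₂) hb (Finset.mem_range.mp hi)
    rw [e1, e2, e3]
  · apply Finset.sum_congr rfl
    intro j _
    have e1 := (cat_right (ξ₁ := ξ₁) (ξ₂ := ξ₂) hb (j := j)).1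
    have e2 : catT n₁ t₁ t₂ (n₁ + j + 1) = t₂ (j+1) := by
      rw [show n₁ + j + 1 = n₁ + (j+1) by ring]
      exact (cat_right (ξ₁ := ξ₁) (ξ₂ := ξ₂) hb).1
    have e3 := (cat_right (ξ₁ := ξ₁) (ξ₂ := ξ₂) hb (j := j)).2
    rw [e1, e2, e3]

end Constructions

section Basic

variable {E : Type*} [NormedAddCommGroup E] [NormedSpace ℝ E] {a b : ℝ}

theorem exists_part_msh (hab : a < b) {δ : ℝ} (hδ : 0 < δ) :
    ∃ n t ξ, IsPart a b n t ξ ∧ Msh δ n t := by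
  obtain ⟨m, hm, hmδ⟩ := exists_unif_nat hab hδ
  exact ⟨m, unif a b m, unif a b m, unif_isPart hab hm, unif_msh hab hm hmδ⟩

theorem hri_unique (hab : a < b) {f : ℝ → E} {I I' : E}
    (h : HasRiemannIntegral f a b I) (h' : HasRiemannIntegral f a b I') : I = I' := by
  rw [hri_iff] at h h'
  by_contra hne
  have hd : 0 < ‖I - I'‖ / 2 :=
    half_pos (norm_pos_iff.mpr (sub_ne_zero.mpr hne))
  obtain ⟨δ₁, hδ₁, H₁⟩ := h _ hd
  obtain ⟨δ₂, hδ₂, H₂⟩ := h' _ hd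
  obtain ⟨n, t, ξ, hp, hm⟩ := exists_part_msh hab (lt_min hδ₁ hδ₂)
  have h1 := H₁ n t ξ hp (fun i hi => lt_of_lt_of_le (hm i hi) (min_le_left _ _))
  have h2 := H₂ n t ξ hp (fun i hi => lt_of_lt_of_le (hm i hi) (min_le_right _ _))
  have : ‖I - I'‖ < ‖I - I'‖ := by
    calc ‖I - I'‖ ≤ ‖RS f n t ξ - I‖ + ‖RS f n t ξ - I'‖ := by
          rw [← norm_neg (RS f n t ξ - I)]
          have : I - I' = -(RS f n t ξ - I) + (RS f n t ξ - I') := by abel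
          rw [this]; exact norm_add_le _ _
      _ < ‖I - I'‖ / 2 + ‖I - I'‖ / 2 := add_lt_add h1 h2
      _ = ‖I - I'‖ := by ring
  exact lt_irrefl _ this

/-- inside a partition, locate an interval containing x -/
theorem locate {n : ℕ} {t : ℕ → ℝ} (hn : 0 < n) {x : ℝ}
    (h0 : t 0 ≤ x) (hn' : x ≤ t n) : ∃ i < n, t i ≤ x ∧ x ≤ t (i + 1) := by
  induction n with
  | zero => omega
  | succ m ih =>
    rcases Nat.eq_zero_or_pos m with rfl | hm
    · exact ⟨0, by omega, h0, hn'⟩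
    · rcases le_or_gt x (t m) with h | h
      · obtain ⟨i, hi, h1, h2⟩ := ih hm h
        exact ⟨i, by omega, h1, h2⟩
      · exact ⟨m, by omega, h.le, hn'⟩

/-- a function with a Riemann integral on `[a,b]` is bounded there -/
theorem hri_bounded (hab : a < b) {f : ℝ → E} {I : E}
    (h : HasRiemannIntegral f a b I) : ∃ M : ℝ, 0 < M ∧ ∀ x ∈ Set.Icc a b, ‖f x‖ ≤ M := by
  rw [hri_iff] at h
  obtain ⟨δ, hδ, H⟩ := h 1 one_pos
  obtain ⟨n, t, ξhole, hp, hm⟩ := exists_part_msh hab hδ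
  -- use left endpoints as tags
  have hptag : IsPart a b n t t :=
    ⟨hp.1, hp.2.1, hp.2.2.1, hp.2.2.2.1, fun i hi => ⟨le_rfl, (hp.2.2.2.1 i hi).le⟩⟩
  set M₀ : ℝ := (Finset.range n).sup' (by simp [hp.1.ne'] : (Finset.range n).Nonempty)
      (fun i => ‖f (t i)‖) with hM₀
  set c : ℝ := (Finset.range n).inf' (by simp [hp.1.ne'] : (Finset.range n).Nonempty)
      (fun i => t (i+1) - t i) with hc
  have hcpos : 0 < c := by
    rw [hc]
    apply lt_of_lt_of_le _ (le_refl _)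
    obtain ⟨i, hi, he⟩ := Finset.exists_mem_eq_inf' (by simp [hp.1.ne'] : (Finset.range n).Nonempty)
      (fun i => t (i+1) - t i)
    rw [he]
    exact sub_pos.mpr (hp.2.2.2.1 i (Finset.mem_range.mp hi))
  have hM₀0 : (0:ℝ) ≤ M₀ := le_trans (norm_nonneg (f (t 0)))
    (Finset.le_sup' (fun i => ‖f (t i)‖) (Finset.mem_range.mpr hp.1))
  refine ⟨M₀ + 2 / c + 1, by have h2c : 0 < 2 / c := by positivity
                             linarith, ?_⟩
  intro x hx
  obtain ⟨i, hi, hx1, hx2⟩ := locate hp.1 (hp.2.1 ▸ hx.1) (hp.2.2.1 ▸ hx.2)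
  -- partition with tag x at position i vs tags = left endpoints
  set ξ' : ℕ → ℝ := Function.update t i x with hξ'
  have hptag' : IsPart a b n t ξ' := by
    refine ⟨hp.1, hp.2.1, hp.2.2.1, hp.2.2.2.1, fun j hj => ?_⟩
    rcases eq_or_ne j i with rfl | hne
    · rw [hξ', Function.update_self]; exact ⟨hx1, hx2⟩
    · rw [hξ', Function.update_of_ne hne]
      exact ⟨le_rfl, (hp.2.2.2.1 j hj).le⟩
  have h1 := H n t t hptag hm
  have h2 := H n t ξ' hptag' hm
  have hdiff : ‖RS f n t ξ' - RS f n t t‖ < 2 := by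
    calc ‖RS f n t ξ' - RS f n t t‖ ≤ ‖RS f n t ξ' - I‖ + ‖RS f n t t - I‖ := by
          have : RS f n t ξ' - RS f n t t = (RS f n t ξ' - I) - (RS f n t t - I) := by abel
          rw [this]; exact norm_sub_le _ _
      _ < 1 + 1 := add_lt_add h2 h1
      _ = 2 := by norm_num
  have hsd : RS f n t ξ' - RS f n t t = (t (i+1) - t i) • (f x - f (t i)) := by
    unfold RS
    rw [← Finset.sum_sub_distrib]
    rw [Finset.sum_eq_single_of_mem i (Finset.mem_range.mpr hi)]
    · rw [hξ', Function.update_self, smul_sub]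
    · intro j _ hne
      rw [hξ', Function.update_of_ne hne, sub_self]
  have hΔ : c ≤ t (i+1) - t i := Finset.inf'_le _ (Finset.mem_range.mpr hi)
  have : (t (i+1) - t i) * ‖f x - f (t i)‖ < 2 := by
    have := hdiff
    rw [hsd, norm_smul, Real.norm_eq_abs, abs_of_pos (lt_of_lt_of_le hcpos hΔ)] at this
    exact this
  have hfx : ‖f x - f (t i)‖ < 2 / c := by
    rcases eq_or_lt_of_le (norm_nonneg (f x - f (t i))) with he | hpos
    · rw [← he]; positivity
    · by_contra hcon
      push_neg at hcon
      have : c * (2 / c) ≤ (t (i+1) - t i) * ‖f x - f (t i)‖ :=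
        mul_le_mul hΔ hcon (by positivity) (by linarith [lt_of_lt_of_le hcpos hΔ])
      rw [mul_div_cancel₀ _ hcpos.ne'] at this
      linarith
  have hM₀i : ‖f (t i)‖ ≤ M₀ :=
    Finset.le_sup' (fun i => ‖f (t i)‖) (Finset.mem_range.mpr hi)
  calc ‖f x‖ ≤ ‖f x - f (t i)‖ + ‖f (t i)‖ := by
        have := norm_add_le (f x - f (t i)) (f (t i)); simpa using this
    _ ≤ 2 / c + M₀ := by linarith [hfx.le]
    _ ≤ M₀ + 2 / c + 1 := by linarith

/-- changing the value of the integrand at `a` does not affect the Riemann integral -/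
theorem hri_congr_update {f g : ℝ → E} (hfg : ∀ x, x ≠ a → f x = g x) {I : E}
    (h : HasRiemannIntegral f a b I) : HasRiemannIntegral g a b I := by
  rw [hri_iff] at h ⊢
  intro ε hε
  obtain ⟨δ, hδ, H⟩ := h (ε/2) (by positivity)
  refine ⟨min δ (ε / (2 * (‖g a - f a‖ + 1))), lt_min hδ (by positivity), ?_⟩
  intro n t ξ hp hm
  have hm1 : Msh δ n t := fun i hi => lt_of_lt_of_le (hm i hi) (min_le_left _ _)
  have key := H n t ξ hp hm1
  have hdiff : ‖RS g n t ξ - RS f n t ξ‖ ≤ (t 1 - t 0) * ‖g a - f a‖ := by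
    unfold RS
    rw [← Finset.sum_sub_distrib]
    have hterm : ∀ j ∈ Finset.range n,
        (t (j+1) - t j) • g (ξ j) - (t (j+1) - t j) • f (ξ j) =
        if j = 0 ∧ ξ 0 = a then (t 1 - t 0) • (g a - f a) else 0 := by
      intro j hj
      rcases eq_or_ne (ξ j) a with he | hne
      · have hj0 : j = 0 := by
          by_contra hj0
          have h1 : t j > t 0 := part_strict_mono hp.2.2.2.1 (Nat.pos_of_ne_zero hj0)
            (Finset.mem_range.mp hj).le
          have h2 : ξ j ≥ t j := (hp.2.2.2.2 j (Finset.mem_range.mp hj)).1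
          rw [he, hp.2.1] at *
          linarith
        subst hj0
        simp [he, smul_sub]
      · have : ¬ (j = 0 ∧ ξ 0 = a) := by
          rintro ⟨rfl, h0⟩; exact hne h0
        rw [if_neg this, hfg _ hne, sub_self]
    rw [Finset.sum_congr rfl hterm]
    rcases Classical.em (0 ∈ Finset.range n ∧ ((0:ℕ) = 0 ∧ ξ 0 = a)) with hc | hc
    · rw [Finset.sum_eq_single_of_mem 0 hc.1]
      · rw [if_pos hc.2, norm_smul, Real.norm_eq_abs]
        have h01 : t 0 < t 1 := hp.2.2.2.1 0 hp.1
        rw [abs_of_pos (by linarith)]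
      · intro j _ hj0; rw [if_neg (by tauto)]
    · have : ∀ j ∈ Finset.range n, (if j = 0 ∧ ξ 0 = a then (t 1 - t 0) • (g a - f a) else 0) = 0 := by
        intro j hj
        rcases eq_or_ne j 0 with rfl | hne
        · rw [if_neg (fun hh => hc ⟨hj, hh⟩)]
        · rw [if_neg (by tauto)]
      rw [Finset.sum_congr rfl this, Finset.sum_const_zero, norm_zero]
      have hpos : (0:ℝ) < t 1 - t 0 := sub_pos.mpr (hp.2.2.2.1 0 hp.1)
      positivity
  have hsmall : (t 1 - t 0) * ‖g a - f a‖ ≤ ε / 2 := by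
    have h01 : t 1 - t 0 < ε / (2 * (‖g a - f a‖ + 1)) :=
      lt_of_lt_of_le (hm 0 hp.1) (min_le_right _ _)
    have hpos : (0:ℝ) < t 1 - t 0 := sub_pos.mpr (hp.2.2.2.1 0 hp.1)
    have : (t 1 - t 0) * ‖g a - f a‖ ≤ (ε / (2 * (‖g a - f a‖ + 1))) * (‖g a - f a‖ + 1) := by
      apply mul_le_mul h01.le (by linarith) (norm_nonneg _) (by positivity)
    calc (t 1 - t 0) * ‖g a - f a‖ ≤ (ε / (2 * (‖g a - f a‖ + 1))) * (‖g a - f a‖ + 1) := this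
      _ = ε / 2 := by field_simp
  calc ‖RS g n t ξ - I‖ ≤ ‖RS g n t ξ - RS f n t ξ‖ + ‖RS f n t ξ - I‖ := by
        have : RS g n t ξ - I = (RS g n t ξ - RS f n t ξ) + (RS f n t ξ - I) := by abel
        rw [this]; exact norm_add_le _ _
    _ < ε / 2 + ε / 2 := add_lt_add_of_le_of_lt (le_trans hdiff hsmall) key
    _ = ε := by ring

end Basic

section Regulated

variable {a b : ℝ} {φ : ℝ → ℝ}

/-- helper: extend a partition satisfying the oscillation property by one more point -/
private theorem ext_part {ε : ℝ} {N : ℕ} {x : ℕ → ℝ} {d d' : ℝ}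
    (h0 : x 0 = a) (hN : x N = d) (hs : ∀ k < N, x k < x (k+1))
    (ho : ∀ k < N, ∀ u ∈ Set.Ioc (x k) (x (k+1)), ∀ v ∈ Set.Ioc (x k) (x (k+1)), |φ u - φ v| ≤ ε)
    (hdd : d < d')
    (ho' : ∀ u ∈ Set.Ioc d d', ∀ v ∈ Set.Ioc d d', |φ u - φ v| ≤ ε) :
    ∃ (N' : ℕ) (x' : ℕ → ℝ), x' 0 = a ∧ x' N' = d' ∧ (∀ k < N', x' k < x' (k+1)) ∧
      ∀ k < N', ∀ u ∈ Set.Ioc (x' k) (x' (k+1)), ∀ v ∈ Set.Ioc (x' k) (x' (k+1)),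
        |φ u - φ v| ≤ ε := by
  refine ⟨N + 1, fun k => if k ≤ N then x k else d', by simp [h0], by simp, ?_, ?_⟩
  · intro k hk
    rcases lt_or_ge k N with h | h
    · simp only [if_pos h.le, if_pos (Nat.succ_le_of_lt h)]
      exact hs k h
    · have hkN : k = N := by omega
      subst hkN
      simp only [if_pos le_rfl, if_neg (by omega : ¬ k + 1 ≤ k), hN]
      exact hdd
  · intro k hk u hu v hv
    rcases lt_or_ge k N with h | h
    · simp only [if_pos h.le, if_pos (Nat.succ_le_of_lt h)] at hu hv
      exact ho k h u hu v hv
    · have hkN : k = N := by omega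
      subst hkN
      simp only [if_pos le_rfl, if_neg (by omega : ¬ k + 1 ≤ k), hN] at hu hv
      exact ho' u hu v hv

/-- the partition lemma for regulated functions: `[a,b]` splits into finitely many
intervals `(x k, x (k+1)]` on each of which `φ` oscillates by at most `ε`. -/
theorem regulated_partition (hab : a < b) (hφ : MemDminus a b φ) {ε : ℝ} (hε : 0 < ε) :
    ∃ (N : ℕ) (x : ℕ → ℝ), 0 < N ∧ x 0 = a ∧ x N = b ∧ (∀ k < N, x k < x (k+1)) ∧
      ∀ k < N, ∀ u ∈ Set.Ioc (x k) (x (k+1)), ∀ v ∈ Set.Ioc (x k) (x (k+1)),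
        |φ u - φ v| ≤ ε := by
  set P : ℝ → Prop := fun d => ∃ (N : ℕ) (x : ℕ → ℝ), x 0 = a ∧ x N = d ∧
      (∀ k < N, x k < x (k+1)) ∧
      ∀ k < N, ∀ u ∈ Set.Ioc (x k) (x (k+1)), ∀ v ∈ Set.Ioc (x k) (x (k+1)),
        |φ u - φ v| ≤ ε with hP
  have hPa : P a := ⟨0, fun _ => a, rfl, rfl, by omega, by omega⟩
  set A : Set ℝ := {d | d ∈ Set.Icc a b ∧ P d} with hA
  have haA : a ∈ A := ⟨⟨le_rfl, hab.le⟩, hPa⟩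
  have hane : A.Nonempty := ⟨a, haA⟩
  have hbdd : BddAbove A := ⟨b, fun d hd => hd.1.2⟩
  set c := sSup A with hc
  have hac : a ≤ c := le_csSup hbdd haA
  have hcb : c ≤ b := csSup_le hane (fun d hd => hd.1.2)
  -- c ∈ A
  have hcA : c ∈ A := by
    rcases eq_or_lt_of_le hac with heq | hlt
    · exact heq ▸ haA
    · -- use left continuity at c
      have hct := hφ.1 c ⟨hlt, hcb⟩
      have hev : {u : ℝ | |φ u - φ c| < ε/2} ∈ nhdsWithin c (Set.Iio c) := by
        have := Metric.tendsto_nhds.mp hct (ε/2) (by positivity)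
        simp only [Real.dist_eq] at this; exact this
      obtain ⟨l, hl, hsub⟩ := mem_nhdsLT_iff_exists_Ioo_subset.mp hev
      have hwc : max l a < c := max_lt hl hlt
      obtain ⟨t', ht'A, ht'⟩ := exists_lt_of_lt_csSup hane hwc
      have ht'c : t' ≤ c := le_csSup hbdd ht'A
      have hosc : ∀ u ∈ Set.Ioc t' c, ∀ v ∈ Set.Ioc t' c, |φ u - φ v| ≤ ε := by
        have hkey : ∀ u ∈ Set.Ioc t' c, |φ u - φ c| ≤ ε/2 := by
          intro u hu
          rcases eq_or_lt_of_le hu.2 with rfl | hult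
          · simp only [sub_self, abs_zero]; positivity
          · have : u ∈ Set.Ioo l c := ⟨lt_of_le_of_lt (le_max_left l a) (lt_trans ht' hu.1), hult⟩
            exact (hsub this).le
        intro u hu v hv
        calc |φ u - φ v| ≤ |φ u - φ c| + |φ c - φ v| := abs_sub_le _ _ _
          _ ≤ ε/2 + ε/2 := add_le_add (hkey u hu) (by rw [abs_sub_comm]; exact hkey v hv)
          _ = ε := by ring
      rcases eq_or_lt_of_le ht'c with rfl | ht'lt
      · exact ht'A
      · obtain ⟨N, x, h0, hN, hs, ho⟩ := ht'A.2
        refine ⟨⟨hac, hcb⟩, ?_⟩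
        exact ext_part h0 hN hs ho ht'lt hosc
  -- c = b
  have hcb' : c = b := by
    by_contra hne
    have hlt : c < b := lt_of_le_of_ne hcb hne
    obtain ⟨L, hL⟩ := hφ.2 c ⟨hac, hlt⟩
    have hev : {u : ℝ | |φ u - L| < ε/2} ∈ nhdsWithin c (Set.Ioi c) := by
      have := Metric.tendsto_nhds.mp hL (ε/2) (by positivity)
      simp only [Real.dist_eq] at this; exact this
    obtain ⟨r, hr, hsub⟩ := mem_nhdsGT_iff_exists_Ioo_subset.mp hev
    set d := min ((c + r)/2) b with hd
    have hcd : c < d := lt_min (by simp at hr ⊢; linarith [hr]) hlt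
    have hdb : d ≤ b := min_le_right _ _
    have hdr : d < r := by
      have : (c + r)/2 < r := by simp at hr; linarith [hr]
      exact lt_of_le_of_lt (min_le_left _ _) this
    have hosc : ∀ u ∈ Set.Ioc c d, ∀ v ∈ Set.Ioc c d, |φ u - φ v| ≤ ε := by
      have hkey : ∀ u ∈ Set.Ioc c d, |φ u - L| ≤ ε/2 := by
        intro u hu
        exact (hsub ⟨hu.1, lt_of_le_of_lt hu.2 hdr⟩).le
      intro u hu v hv
      calc |φ u - φ v| ≤ |φ u - L| + |L - φ v| := abs_sub_le _ _ _
        _ ≤ ε/2 + ε/2 := add_le_add (hkey u hu) (by rw [abs_sub_comm]; exact hkey v hv)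
        _ = ε := by ring
    obtain ⟨N, x, h0, hN, hs, ho⟩ := hcA.2
    have hdA : d ∈ A :=
      ⟨⟨le_trans hac hcd.le, hdb⟩, ext_part h0 hN hs ho hcd hosc⟩
    have : d ≤ c := le_csSup hbdd hdA
    linarith
  obtain ⟨N, x, h0, hN, hs, ho⟩ := hcA.2
  rw [hcb'] at hN
  have hNpos : 0 < N := by
    rcases Nat.eq_zero_or_pos N with rfl | h
    · rw [h0] at hN; exact absurd hN hab.ne
    · exact h
  exact ⟨N, x, hNpos, h0, hN, hs, ho⟩

/-- locate within half-open intervals -/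
theorem locateIoc {N : ℕ} {x : ℕ → ℝ} (hN : 0 < N) {u : ℝ}
    (h0 : x 0 < u) (hN' : u ≤ x N) : ∃ k < N, u ∈ Set.Ioc (x k) (x (k+1)) := by
  induction N with
  | zero => omega
  | succ m ih =>
    rcases Nat.eq_zero_or_pos m with rfl | hm
    · exact ⟨0, by omega, h0, hN'⟩
    · rcases le_or_gt u (x m) with h | h
      · obtain ⟨k, hk, hmem⟩ := ih hm h
        exact ⟨k, by omega, hmem⟩
      · exact ⟨m, by omega, h, hN'⟩

/-- a function in `D⁻[a,b]` is bounded on `[a,b]` -/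
theorem regulated_bounded (hab : a < b) (hφ : MemDminus a b φ) :
    ∃ M : ℝ, 0 < M ∧ ∀ u ∈ Set.Icc a b, |φ u| ≤ M := by
  obtain ⟨N, x, hN, h0, hb, hs, ho⟩ := regulated_partition hab hφ one_pos
  set S := (Finset.range (N+1)).sup' (by simp : (Finset.range (N+1)).Nonempty)
      (fun k => |φ (x k)|) with hS
  have hSk : ∀ k ≤ N, |φ (x k)| ≤ S := fun k hk =>
    Finset.le_sup' (fun k => |φ (x k)|) (Finset.mem_range.mpr (by omega))
  refine ⟨S + 1, by linarith [le_trans (abs_nonneg (φ (x 0))) (hSk 0 (by omega))], ?_⟩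
  intro u hu
  rcases eq_or_lt_of_le hu.1 with heq | hau
  · have : |φ u| = |φ (x 0)| := by rw [← heq, h0]
    linarith [hSk 0 (by omega)]
  · obtain ⟨k, hk, hmem⟩ := locateIoc hN (h0 ▸ hau) (hb ▸ hu.2)
    have hx1 : x (k+1) ∈ Set.Ioc (x k) (x (k+1)) := ⟨hs k hk, le_rfl⟩
    have := ho k hk u hmem (x (k+1)) hx1
    have h2 := hSk (k+1) (by omega)
    calc |φ u| ≤ |φ u - φ (x (k+1))| + |φ (x (k+1))| := by
          have := abs_sub_abs_le_abs_sub (φ u) (φ (x (k+1))); linarith [abs_abs (φ u)]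
      _ ≤ 1 + S := add_le_add this h2
      _ = S + 1 := by ring


/-- a function in `D⁻[a,b]` is interval integrable on `[a,b]` -/
theorem regulated_integrable (hab : a < b) (hφ : MemDminus a b φ) :
    IntervalIntegrable φ volume a b := by
  obtain ⟨Mφ, hMφ0, hMφ⟩ := regulated_bounded hab hφ
  have key : ∀ m : ℕ, ∃ g : ℝ → ℝ, Measurable g ∧
      ∀ s ∈ Set.Ioc a b, |g s - φ s| ≤ 1/(m+1) := by
    intro m
    obtain ⟨N, x, hN, h0, hb, hs, ho⟩ := regulated_partition hab hφ
      (by positivity : (0:ℝ) < 1/(m+1))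
    refine ⟨fun s => ∑ k ∈ Finset.range N,
      Set.indicator (Set.Ioc (x k) (x (k+1))) (fun _ => φ (x (k+1))) s, ?_, ?_⟩
    · apply Finset.measurable_sum
      intro k _
      exact Measurable.indicator measurable_const measurableSet_Ioc
    · intro s hsm
      obtain ⟨k, hk, hmem⟩ := locateIoc hN (h0 ▸ hsm.1) (hb ▸ hsm.2)
      have hsum : ∑ k' ∈ Finset.range N,
          Set.indicator (Set.Ioc (x k') (x (k'+1))) (fun _ => φ (x (k'+1))) s
          = φ (x (k+1)) := by
        rw [Finset.sum_eq_single_of_mem k (Finset.mem_range.mpr hk)]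
        · exact Set.indicator_of_mem hmem _
        · intro k' hk' hne
          apply Set.indicator_of_notMem
          intro hin
          rcases lt_or_gt_of_ne hne with h | h
          · have : x (k'+1) ≤ x k := part_mono hs (by omega) (by omega)
            exact absurd (lt_of_le_of_lt (le_trans hin.2 this) hmem.1) (lt_irrefl s)
          · have : x (k+1) ≤ x k' := part_mono hs (by omega) (Finset.mem_range.mp hk').le
            exact absurd (lt_of_le_of_lt (le_trans hmem.2 this) hin.1) (lt_irrefl s)
      dsimp only
      rw [hsum]
      have hx1 : x (k+1) ∈ Set.Ioc (x k) (x (k+1)) := ⟨hs k hk, le_rfl⟩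
      exact ho k hk (x (k+1)) hx1 s hmem
  choose g hgm hgb using key
  have haesm : AEStronglyMeasurable φ (volume.restrict (Set.Ioc a b)) := by
    apply aestronglyMeasurable_of_tendsto_ae (u := Filter.atTop) (fun m => ((hgm m).aestronglyMeasurable))
    rw [ae_restrict_iff' measurableSet_Ioc]
    apply Filter.Eventually.of_forall
    intro s hsm
    rw [← tendsto_sub_nhds_zero_iff]
    apply squeeze_zero_norm (a := fun m : ℕ => 1/((m:ℝ)+1)) (fun m => by
      simpa [Real.norm_eq_abs] using hgb m s hsm)
    exact tendsto_one_div_add_atTop_nhds_zero_nat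
  rw [intervalIntegrable_iff, Set.uIoc_of_le hab.le]
  refine ⟨haesm, ?_⟩
  apply MeasureTheory.HasFiniteIntegral.restrict_of_bounded (C := Mφ)
    (measure_Ioc_lt_top)
  rw [ae_restrict_iff' measurableSet_Ioc]
  exact Filter.Eventually.of_forall fun s hsm => by
    simpa [Real.norm_eq_abs] using hMφ s (Set.Ioc_subset_Icc_self hsm)

/-- Lipschitz property of `ψ t = ∫_t^b φ` -/
theorem psi_lip (hab : a < b) (hint : IntervalIntegrable φ volume a b) {Mφ : ℝ}
    (hMφ : ∀ u ∈ Set.Icc a b, |φ u| ≤ Mφ) :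
    ∀ t ∈ Set.Icc a b, ∀ t' ∈ Set.Icc a b,
      |(∫ s in t..b, φ s) - ∫ s in t'..b, φ s| ≤ Mφ * |t' - t| := by
  intro t ht t' ht'
  have hsub : ∀ u v : ℝ, u ∈ Set.Icc a b → v ∈ Set.Icc a b →
      IntervalIntegrable φ volume u v := by
    intro u v hu hv
    apply hint.mono_set
    rw [Set.uIcc_subset_uIcc_iff_mem]
    constructor
    · rw [Set.uIcc_of_le hab.le]; exact hu
    · rw [Set.uIcc_of_le hab.le]; exact hv
  have hbicc : b ∈ Set.Icc a b := ⟨hab.le, le_rfl⟩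
  have hadd : (∫ s in t..t', φ s) + (∫ s in t'..b, φ s) = ∫ s in t..b, φ s :=
    intervalIntegral.integral_add_adjacent_intervals (hsub t t' ht ht') (hsub t' b ht' hbicc)
  have heq : (∫ s in t..b, φ s) - (∫ s in t'..b, φ s) = ∫ s in t..t', φ s := by
    rw [← hadd]; ring
  rw [heq]
  have hbound : ∀ x ∈ Set.uIoc t t', ‖φ x‖ ≤ Mφ := by
    intro x hx
    have hx' : x ∈ Set.Icc a b := by
      apply Set.Icc_subset_Icc (le_min ht.1 ht'.1) (max_le ht.2 ht'.2)
      exact Set.Ioc_subset_Icc_self hx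
    simpa [Real.norm_eq_abs] using hMφ x hx'
  have h := intervalIntegral.norm_integral_le_of_norm_le_const hbound
  simpa [Real.norm_eq_abs] using h

theorem psi_memD (hab : a < b) (hint : IntervalIntegrable φ volume a b) {Mφ : ℝ}
    (hMφ : ∀ u ∈ Set.Icc a b, |φ u| ≤ Mφ) (hMφ0 : 0 < Mφ) :
    MemDminus a b (fun t => ∫ s in t..b, φ s) := by
  have hlip := psi_lip hab hint hMφ
  constructor
  · intro x hx
    rw [Metric.tendsto_nhdsWithin_nhds]
    intro ε hε
    refine ⟨min (ε/(Mφ+1)) (x - a), lt_min (by positivity) (by linarith [hx.1]), ?_⟩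
    intro u hu hd
    rw [Real.dist_eq] at hd ⊢
    have hd1 : |u - x| < ε/(Mφ+1) := lt_of_lt_of_le hd (min_le_left _ _)
    have hd2 : |u - x| < x - a := lt_of_lt_of_le hd (min_le_right _ _)
    have hua : a < u := by
      have := abs_lt.mp hd2
      linarith [this.1]
    have huI : u ∈ Set.Icc a b := ⟨hua.le, le_trans (le_of_lt hu) hx.2⟩
    have hxI : x ∈ Set.Icc a b := ⟨le_trans hua.le (le_of_lt hu), hx.2⟩
    calc |(∫ s in u..b, φ s) - ∫ s in x..b, φ s| ≤ Mφ * |u - x| := by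
          rw [abs_sub_comm]; exact hlip x hxI u huI
      _ < Mφ * (ε/(Mφ+1)) := by
          apply mul_lt_mul_of_pos_left _ hMφ0
          exact hd1
      _ ≤ ε := by
          rw [div_eq_mul_inv]
          rw [← mul_assoc]
          have h1 : Mφ * ε ≤ (Mφ+1) * ε := by nlinarith
          have h2 : (0:ℝ) < Mφ + 1 := by linarith
          calc Mφ * ε * (Mφ+1)⁻¹ ≤ (Mφ+1) * ε * (Mφ+1)⁻¹ := by
                apply mul_le_mul_of_nonneg_right h1 (by positivity)
            _ = ε := by field_simp
  · intro x hx
    refine ⟨∫ s in x..b, φ s, ?_⟩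
    rw [Metric.tendsto_nhdsWithin_nhds]
    intro ε hε
    refine ⟨min (ε/(Mφ+1)) (b - x), lt_min (by positivity) (by linarith [hx.2]), ?_⟩
    intro u hu hd
    rw [Real.dist_eq] at hd ⊢
    have hd1 : |u - x| < ε/(Mφ+1) := lt_of_lt_of_le hd (min_le_left _ _)
    have hd2 : |u - x| < b - x := lt_of_lt_of_le hd (min_le_right _ _)
    have hub : u < b := by
      have := abs_lt.mp hd2
      linarith [this.2]
    have huI : u ∈ Set.Icc a b := ⟨le_trans hx.1 (le_of_lt hu), hub.le⟩
    have hxI : x ∈ Set.Icc a b := ⟨hx.1, hx.2.le⟩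
    calc |(∫ s in u..b, φ s) - ∫ s in x..b, φ s| ≤ Mφ * |u - x| := by
          rw [abs_sub_comm]; exact hlip x hxI u huI
      _ < Mφ * (ε/(Mφ+1)) := mul_lt_mul_of_pos_left hd1 hMφ0
      _ ≤ ε := by
          rw [div_eq_mul_inv, ← mul_assoc]
          have h1 : Mφ * ε ≤ (Mφ+1) * ε := by nlinarith
          calc Mφ * ε * (Mφ+1)⁻¹ ≤ (Mφ+1) * ε * (Mφ+1)⁻¹ := by
                apply mul_le_mul_of_nonneg_right h1 (by positivity)
            _ = ε := by field_simp


theorem locate_gap {N : ℕ} {x : ℕ → ℝ} (hs : ∀ k < N, x k < x (k+1)) :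
    ∀ {c d : ℝ}, c ≤ d → x 0 ≤ c → d ≤ x N → (∀ k ≤ N, ¬(c ≤ x k ∧ x k ≤ d)) →
    ∃ k < N, x k < c ∧ d < x (k+1) := by
  induction N with
  | zero =>
    intro c d hcd h0 hN hno
    exact absurd ⟨le_trans hcd hN, le_trans h0 hcd⟩ (hno 0 le_rfl)
  | succ m ih =>
    intro c d hcd h0 hN hno
    rcases le_or_gt d (x m) with h | h
    · obtain ⟨k, hk, h1, h2⟩ := ih (fun k hk => hs k (by omega)) hcd h0 h
        (fun k hk => hno k (by omega))
      exact ⟨k, by omega, h1, h2⟩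
    · have hxc : x m < c := by
        by_contra hcon
        push_neg at hcon
        exact hno m (by omega) ⟨hcon, h.le⟩
      have hdx : d < x (m+1) := by
        rcases eq_or_lt_of_le hN with heq | hlt
        · exfalso
          exact hno (m+1) le_rfl ⟨le_trans hcd heq.le, heq ▸ le_rfl⟩
        · exact hlt
      exact ⟨m, by omega, hxc, hdx⟩

/-- KEY 1: total error of Riemann sums of `φ` against its integral, over all
subintervals simultaneously, is small for fine partitions -/
theorem key1 {a b : ℝ} {φ : ℝ → ℝ} (hab : a < b) (hφ : MemDminus a b φ)
    (hint : IntervalIntegrable φ volume a b)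
    {Mφ : ℝ} (hMφ0 : 0 < Mφ) (hMφ : ∀ u ∈ Set.Icc a b, |φ u| ≤ Mφ) {ε : ℝ} (hε : 0 < ε) :
    ∃ δ : ℝ, 0 < δ ∧ ∀ (n : ℕ) (t ξ : ℕ → ℝ), IsPart a b n t ξ → Msh δ n t →
      ∑ i ∈ Finset.range n,
        |(t (i+1) - t i) * φ (ξ i) - ∫ s in t i..t (i+1), φ s| ≤ ε := by
  have hba : 0 < b - a := sub_pos.mpr hab
  set ε' := ε / (2*(b-a)) with hε'def
  have hε'0 : 0 < ε' := by positivity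
  obtain ⟨N, x, hN, h0, hb, hs, ho⟩ := regulated_partition hab hφ hε'0
  set δ := ε / (8*(N+1)*Mφ) with hδdef
  have hδ0 : 0 < δ := by positivity
  refine ⟨δ, hδ0, ?_⟩
  intro n t ξ hp hm
  have hsub : ∀ u v : ℝ, u ∈ Set.Icc a b → v ∈ Set.Icc a b →
      IntervalIntegrable φ volume u v := by
    intro u v hu hv
    apply hint.mono_set
    rw [Set.uIcc_subset_uIcc_iff_mem]
    exact ⟨by rw [Set.uIcc_of_le hab.le]; exact hu, by rw [Set.uIcc_of_le hab.le]; exact hv⟩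
  have hΔpos : ∀ i < n, (0:ℝ) < t (i+1) - t i := fun i hi => sub_pos.mpr (hp.2.2.2.1 i hi)
  set T : ℕ → ℝ := fun i => |(t (i+1) - t i) * φ (ξ i) - ∫ s in t i..t (i+1), φ s| with hT
  have hterm : ∀ i < n, T i = |∫ s in t i..t (i+1), (φ (ξ i) - φ s)| := by
    intro i hi
    rw [hT]
    simp only []
    congr 1
    rw [intervalIntegral.integral_sub intervalIntegrable_const
      (hsub _ _ (part_mem hp hi.le) (part_mem hp hi))]
    rw [intervalIntegral.integral_const, smul_eq_mul, mul_comm]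
  -- membership helper
  have hmem_icc : ∀ i < n, ∀ s ∈ Set.Ioc (t i) (t (i+1)), s ∈ Set.Icc a b := by
    intro i hi s hsm
    exact ⟨le_trans (part_mem hp hi.le).1 hsm.1.le, le_trans hsm.2 (part_mem hp hi).2⟩
  -- bad-interval bound
  have hbad : ∀ i < n, T i ≤ 2 * Mφ * (t (i+1) - t i) := by
    intro i hi
    rw [hterm i hi]
    have hbound : ∀ s ∈ Set.uIoc (t i) (t (i+1)), ‖φ (ξ i) - φ s‖ ≤ 2 * Mφ := by
      intro s hsm
      rw [Set.uIoc_of_le (hp.2.2.2.1 i hi).le] at hsm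
      have h1 := hMφ (ξ i) (tag_mem hp hi)
      have h2 := hMφ s (hmem_icc i hi s hsm)
      calc ‖φ (ξ i) - φ s‖ ≤ ‖φ (ξ i)‖ + ‖φ s‖ := norm_sub_le _ _
        _ ≤ Mφ + Mφ := add_le_add (by simpa [Real.norm_eq_abs] using h1)
            (by simpa [Real.norm_eq_abs] using h2)
        _ = 2 * Mφ := by ring
    have h := intervalIntegral.norm_integral_le_of_norm_le_const hbound
    calc |∫ s in t i..t (i+1), (φ (ξ i) - φ s)| ≤ 2*Mφ*|t (i+1) - t i| := by
          simpa [Real.norm_eq_abs] using h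
      _ = 2*Mφ*(t (i+1) - t i) := by rw [abs_of_pos (hΔpos i hi)]
  -- good-interval bound
  have hgood : ∀ i < n, (∀ k ≤ N, ¬(t i ≤ x k ∧ x k ≤ t (i+1))) →
      T i ≤ ε' * (t (i+1) - t i) := by
    intro i hi hno
    obtain ⟨k, hk, hk1, hk2⟩ := locate_gap hs (hp.2.2.2.1 i hi).le
      (h0 ▸ (part_mem hp hi.le).1) (hb ▸ (part_mem hp hi).2) hno
    rw [hterm i hi]
    have hbound : ∀ s ∈ Set.uIoc (t i) (t (i+1)), ‖φ (ξ i) - φ s‖ ≤ ε' := by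
      intro s hsm
      rw [Set.uIoc_of_le (hp.2.2.2.1 i hi).le] at hsm
      have hξm : ξ i ∈ Set.Ioc (x k) (x (k+1)) := by
        obtain ⟨hl, hr⟩ := hp.2.2.2.2 i hi
        exact ⟨lt_of_lt_of_le hk1 hl, le_of_lt (lt_of_le_of_lt hr hk2)⟩
      have hsm' : s ∈ Set.Ioc (x k) (x (k+1)) :=
        ⟨lt_trans hk1 hsm.1, le_of_lt (lt_of_le_of_lt hsm.2 hk2)⟩
      rw [Real.norm_eq_abs]
      exact ho k hk (ξ i) hξm s hsm'
    have h := intervalIntegral.norm_integral_le_of_norm_le_const hbound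
    calc |∫ s in t i..t (i+1), (φ (ξ i) - φ s)| ≤ ε' * |t (i+1) - t i| := by
          simpa [Real.norm_eq_abs] using h
      _ = ε' * (t (i+1) - t i) := by rw [abs_of_pos (hΔpos i hi)]
  -- split the sum into bad and good parts
  classical
  set P : ℕ → Prop := fun i => ∃ k, k ≤ N ∧ t i ≤ x k ∧ x k ≤ t (i+1) with hPdef
  rw [← Finset.sum_filter_add_sum_filter_not (Finset.range n) P T]
  -- bad part
  have hcard2 : ∀ k, ((Finset.range n).filter
      (fun i => t i ≤ x k ∧ x k ≤ t (i+1))).card ≤ 2 := by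
    intro k
    set S := (Finset.range n).filter (fun i => t i ≤ x k ∧ x k ≤ t (i+1)) with hS
    rcases S.eq_empty_or_nonempty with he | hne
    · rw [he]; simp
    · set m := S.min' hne with hmdef
      have hmS : m ∈ S := S.min'_mem hne
      have hsub3 : S ⊆ {m, m+1} := by
        intro j hj
        have hmj : m ≤ j := S.min'_le j hj
        rcases eq_or_lt_of_le hmj with heq | hlt
        · simp [← heq]
        · have hjn : j < n := Finset.mem_range.mp (Finset.mem_filter.mp hj).1
          have hj2 : t j ≤ x k := (Finset.mem_filter.mp hj).2.1
          have hm2 : x k ≤ t (m+1) := (Finset.mem_filter.mp hmS).2.2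
          have hle : j ≤ m + 1 := by
            by_contra hcon
            push_neg at hcon
            have := part_strict_mono hp.2.2.2.1 (show m+1 < j by omega) hjn.le
            linarith
          have : j = m + 1 := by omega
          simp [this]
      calc S.card ≤ ({m, m+1} : Finset ℕ).card := Finset.card_le_card hsub3
        _ ≤ 2 := le_trans (Finset.card_insert_le m {m+1}) (by simp)
  have hcard : ((Finset.range n).filter P).card ≤ 2*(N+1) := by
    have hsub2 : (Finset.range n).filter P ⊆ (Finset.range (N+1)).biUnion
        (fun k => (Finset.range n).filter (fun i => t i ≤ x k ∧ x k ≤ t (i+1))) := by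
      intro i hi'
      have h := Finset.mem_filter.mp hi'
      obtain ⟨k, hkN, hk1, hk2⟩ := h.2
      rw [Finset.mem_biUnion]
      exact ⟨k, Finset.mem_range.mpr (by omega), Finset.mem_filter.mpr ⟨h.1, hk1, hk2⟩⟩
    calc ((Finset.range n).filter P).card ≤ _ := Finset.card_le_card hsub2
      _ ≤ ∑ k ∈ Finset.range (N+1), ((Finset.range n).filter
            (fun i => t i ≤ x k ∧ x k ≤ t (i+1))).card := Finset.card_biUnion_le
      _ ≤ ∑ _k ∈ Finset.range (N+1), 2 := Finset.sum_le_sum (fun k _ => hcard2 k)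
      _ = 2*(N+1) := by simp [Finset.sum_const, mul_comm]
  have hbadsum : ∑ i ∈ (Finset.range n).filter P, T i ≤ ε/2 := by
    have hle : ∀ i ∈ (Finset.range n).filter P, T i ≤ 2*Mφ*δ := by
      intro i hi'
      have hi := Finset.mem_range.mp (Finset.mem_filter.mp hi').1
      calc T i ≤ 2*Mφ*(t (i+1) - t i) := hbad i hi
        _ ≤ 2*Mφ*δ := mul_le_mul_of_nonneg_left (hm i hi).le (by positivity)
    calc ∑ i ∈ (Finset.range n).filter P, T i
        ≤ ((Finset.range n).filter P).card • (2*Mφ*δ) :=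
          Finset.sum_le_card_nsmul _ _ _ hle
      _ = ((Finset.range n).filter P).card * (2*Mφ*δ) := nsmul_eq_mul _ _
      _ ≤ (2*(N+1) : ℕ) * (2*Mφ*δ) := by
          apply mul_le_mul_of_nonneg_right _ (by positivity)
          exact_mod_cast hcard
      _ ≤ ε/2 := by
          rw [hδdef]
          push_cast
          rw [div_eq_mul_inv, div_eq_mul_inv]
          have hNpos : (0:ℝ) < (N:ℝ)+1 := by positivity
          have : (2*((N:ℝ)+1)) * (2*Mφ*(ε * (8*((N:ℝ)+1)*Mφ)⁻¹)) = ε/2 := by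
            field_simp
            ring
          linarith [this.le]
  -- good part
  have hgoodsum : ∑ i ∈ (Finset.range n).filter (fun i => ¬ P i), T i ≤ ε/2 := by
    have hle : ∀ i ∈ (Finset.range n).filter (fun i => ¬ P i),
        T i ≤ ε' * (t (i+1) - t i) := by
      intro i hi'
      have h1 := Finset.mem_filter.mp hi'
      have hi := Finset.mem_range.mp h1.1
      apply hgood i hi
      intro k hk hcon
      exact h1.2 ⟨k, hk, hcon.1, hcon.2⟩
    calc ∑ i ∈ (Finset.range n).filter (fun i => ¬ P i), T i
        ≤ ∑ i ∈ (Finset.range n).filter (fun i => ¬ P i), ε' * (t (i+1) - t i) :=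
          Finset.sum_le_sum hle
      _ = ε' * ∑ i ∈ (Finset.range n).filter (fun i => ¬ P i), (t (i+1) - t i) := by
          rw [Finset.mul_sum]
      _ ≤ ε' * ∑ i ∈ Finset.range n, (t (i+1) - t i) := by
          apply mul_le_mul_of_nonneg_left _ hε'0.le
          apply Finset.sum_le_sum_of_subset_of_nonneg (Finset.filter_subset _ _)
          intro i hi _
          exact (hΔpos i (Finset.mem_range.mp hi)).le
      _ = ε' * (b - a) := by rw [sum_diff hp]
      _ = ε/2 := by
          rw [hε'def]
          field_simp
  linarith

end Regulated

section Main

variable {E : Type*} [NormedAddCommGroup E] [NormedSpace ℝ E] {a b : ℝ} {f : ℝ → E}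

theorem rs_bound {c d : ℝ} {m : ℕ} {s ζ : ℕ → ℝ} (hp : IsPart c d m s ζ) {M : ℝ}
    (hM : ∀ x ∈ Set.Icc c d, ‖f x‖ ≤ M) : ‖RS f m s ζ‖ ≤ M * (d - c) := by
  have hΔ : ∀ i < m, (0:ℝ) ≤ s (i+1) - s i := fun i hi => (sub_pos.mpr (hp.2.2.2.1 i hi)).le
  calc ‖RS f m s ζ‖ ≤ ∑ i ∈ Finset.range m, ‖(s (i+1) - s i) • f (ζ i)‖ :=
        norm_sum_le _ _
    _ ≤ ∑ i ∈ Finset.range m, (s (i+1) - s i) * M := by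
        apply Finset.sum_le_sum
        intro i hi
        have hi' := Finset.mem_range.mp hi
        rw [norm_smul, Real.norm_eq_abs, abs_of_nonneg (hΔ i hi')]
        exact mul_le_mul_of_nonneg_left (hM _ (tag_mem hp hi')) (hΔ i hi')
    _ = M * (d - c) := by rw [← Finset.sum_mul, sum_diff hp, mul_comm]

/-- KEY 2: uniform closeness of partial Riemann sums to `F` at partition points -/
theorem key2 (hab : a < b) {Ib : E} (hIb : HasRiemannIntegral f a b Ib)
    {F : ℝ → E} (hF : ∀ t ∈ Set.Icc a b, HasRiemannIntegral f a t (F t))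
    {ε : ℝ} (hε : 0 < ε) :
    ∃ δ : ℝ, 0 < δ ∧ ∀ (n : ℕ) (t ξ : ℕ → ℝ), IsPart a b n t ξ → Msh δ n t →
      ∀ k, 0 < k → k ≤ n →
      ‖F (t k) - ∑ j ∈ Finset.range k, (t (j+1) - t j) • f (ξ j)‖ ≤ ε := by
  rw [hri_iff] at hIb
  obtain ⟨δb, hδb0, Hb⟩ := hIb (ε/3) (by positivity)
  refine ⟨δb, hδb0, ?_⟩
  intro n t ξ hp hm k hk0 hkn
  set d := t k with hd
  have had : a < d := hp.2.1 ▸ part_strict_mono hp.2.2.2.1 hk0 hkn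
  have hdicc : d ∈ Set.Icc a b := part_mem hp hkn
  obtain ⟨δd, hδd0, Hd⟩ := (hri_iff f a d (F d)).mp (hF d hdicc) (ε/3) (by positivity)
  have hSk : ∑ j ∈ Finset.range k, (t (j+1) - t j) • f (ξ j) = RS f k t ξ := rfl
  have hresp : IsPart a d k t ξ :=
    ⟨hk0, hp.2.1, rfl, fun i hi => hp.2.2.2.1 i (lt_of_lt_of_le hi hkn),
      fun i hi => hp.2.2.2.2 i (lt_of_lt_of_le hi hkn)⟩
  have hresm : Msh δb k t := fun i hi => hm i (lt_of_lt_of_le hi hkn)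
  rw [hSk]
  rcases eq_or_lt_of_le hkn with heq | hklt
  · -- k = n : t k = b
    subst heq
    have hdb : d = b := hp.2.2.1
    obtain ⟨m, hm0, hmm⟩ := exists_unif_nat had (lt_min hδb0 hδd0)
    have hup : IsPart a d m (unif a d m) (unif a d m) := unif_isPart had hm0
    have hum : Msh (min δb δd) m (unif a d m) := unif_msh had hm0 hmm
    have h1 : ‖RS f m (unif a d m) (unif a d m) - F d‖ < ε/3 := by
      have := Hd m (unif a d m) (unif a d m) hup
        (fun i hi => lt_of_lt_of_le (hum i hi) (min_le_right _ _))
      exact this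
    have h2 : ‖RS f m (unif a d m) (unif a d m) - Ib‖ < ε/3 := by
      apply Hb m (unif a d m) (unif a d m) (hdb ▸ hup)
      exact fun i hi => lt_of_lt_of_le (hum i hi) (min_le_left _ _)
    have h3 : ‖RS f k t ξ - Ib‖ < ε/3 := Hb k t ξ (hdb ▸ hresp) hresm
    have hdec : F d - RS f k t ξ = (F d - RS f m (unif a d m) (unif a d m))
        + (RS f m (unif a d m) (unif a d m) - Ib) + (Ib - RS f k t ξ) := by abel
    have ha1 : ‖F d - RS f m (unif a d m) (unif a d m)‖ < ε/3 := by
      rw [norm_sub_rev]; exact h1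
    have ha3 : ‖Ib - RS f k t ξ‖ < ε/3 := by rw [norm_sub_rev]; exact h3
    calc ‖F d - RS f k t ξ‖
        = ‖(F d - RS f m (unif a d m) (unif a d m))
          + (RS f m (unif a d m) (unif a d m) - Ib) + (Ib - RS f k t ξ)‖ := by rw [hdec]
      _ ≤ ‖F d - RS f m (unif a d m) (unif a d m)‖
          + ‖RS f m (unif a d m) (unif a d m) - Ib‖ + ‖Ib - RS f k t ξ‖ := norm_add₃_le
      _ ≤ ε := by linarith [ha1, h2.le, ha3]
  · -- k < n : d < b
    have hdb : d < b := by
      have := part_strict_mono hp.2.2.2.1 hklt le_rfl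
      rw [hp.2.2.1] at this
      exact this
    -- tail partition of [d,b]
    obtain ⟨m₂, hm₂0, hm₂m⟩ := exists_unif_nat hdb hδb0
    set Q := unif d b m₂ with hQ
    have hQp : IsPart d b m₂ Q Q := unif_isPart hdb hm₂0
    have hQm : Msh δb m₂ Q := unif_msh hdb hm₂0 hm₂m
    have hQ0 : Q 0 = d := by simp [hQ, unif]
    -- first full partition : our partition restricted to [a,d] + Q
    have hb1 : t k = Q 0 := by rw [hQ0]
    have hP1p : IsPart a b (k + m₂) (catT k t Q) (catX k ξ Q) := cat_isPart hresp hQp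
    have hP1m : Msh δb (k + m₂) (catT k t Q) := cat_msh hb1 hresm hQm
    have h1 : ‖RS f k t ξ + RS f m₂ Q Q - Ib‖ < ε/3 := by
      have := Hb (k+m₂) _ _ hP1p hP1m
      rwa [cat_RS f hb1] at this
    -- second full partition : uniform on [a,d] + Q
    obtain ⟨m₁, hm₁0, hm₁m⟩ := exists_unif_nat had (lt_min hδb0 hδd0)
    set U := unif a d m₁ with hU
    have hUp : IsPart a d m₁ U U := unif_isPart had hm₁0
    have hUm : Msh (min δb δd) m₁ U := unif_msh had hm₁0 hm₁m
    have hb2 : U m₁ = Q 0 := by rw [hQ0, hUp.2.2.1]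
    have hP2p : IsPart a b (m₁ + m₂) (catT m₁ U Q) (catX m₁ U Q) := cat_isPart hUp hQp
    have hP2m : Msh δb (m₁ + m₂) (catT m₁ U Q) :=
      cat_msh hb2 (fun i hi => lt_of_lt_of_le (hUm i hi) (min_le_left _ _)) hQm
    have h2 : ‖RS f m₁ U U + RS f m₂ Q Q - Ib‖ < ε/3 := by
      have := Hb (m₁+m₂) _ _ hP2p hP2m
      rwa [cat_RS f hb2] at this
    have h3 : ‖RS f m₁ U U - F d‖ < ε/3 :=
      Hd m₁ U U hUp (fun i hi => lt_of_lt_of_le (hUm i hi) (min_le_right _ _))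
    have hdec : F d - RS f k t ξ = (F d - RS f m₁ U U)
        + (RS f m₁ U U + RS f m₂ Q Q - Ib) + (Ib - (RS f k t ξ + RS f m₂ Q Q)) := by abel
    have ha1 : ‖F d - RS f m₁ U U‖ < ε/3 := by rw [norm_sub_rev]; exact h3
    have ha3 : ‖Ib - (RS f k t ξ + RS f m₂ Q Q)‖ < ε/3 := by rw [norm_sub_rev]; exact h1
    calc ‖F d - RS f k t ξ‖
        = ‖(F d - RS f m₁ U U) + (RS f m₁ U U + RS f m₂ Q Q - Ib)
          + (Ib - (RS f k t ξ + RS f m₂ Q Q))‖ := by rw [hdec]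
      _ ≤ ‖F d - RS f m₁ U U‖ + ‖RS f m₁ U U + RS f m₂ Q Q - Ib‖
          + ‖Ib - (RS f k t ξ + RS f m₂ Q Q)‖ := norm_add₃_le
      _ ≤ ε := by linarith [ha1, h2.le, ha3]

/-- Lipschitz bound for the (modified) primitive `G = update F a 0` -/
theorem G_lip (hab : a < b) {M : ℝ} (hM0 : 0 < M) (hM : ∀ x ∈ Set.Icc a b, ‖f x‖ ≤ M)
    {F : ℝ → E} (hF : ∀ t ∈ Set.Icc a b, HasRiemannIntegral f a t (F t)) :
    ∀ u ∈ Set.Icc a b, ∀ v ∈ Set.Icc a b, u ≤ v →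
      ‖Function.update F a 0 v - Function.update F a 0 u‖ ≤ M * (v - u) := by
  intro u hu v hv huv
  rcases eq_or_lt_of_le huv with heq | hlt
  · subst heq; simp
  apply le_of_forall_pos_le_add
  intro ε hε
  have hMIcc : ∀ {c d : ℝ}, a ≤ c → d ≤ b → ∀ x ∈ Set.Icc c d, ‖f x‖ ≤ M :=
    fun hc hd x hx => hM x ⟨le_trans hc hx.1, le_trans hx.2 hd⟩
  rcases eq_or_lt_of_le hu.1 with hau | hau
  · -- u = a
    have hav : a < v := hau ▸ hlt
    have hva : v ≠ a := ne_of_gt hav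
    rw [← hau, Function.update_self, Function.update_of_ne hva, sub_zero]
    obtain ⟨δv, hδv0, Hv⟩ := (hri_iff f a v (F v)).mp (hF v hv) ε hε
    obtain ⟨m, hm0, hmm⟩ := exists_unif_nat hav hδv0
    have hup := unif_isPart hav hm0
    have h1 := Hv m _ _ hup (unif_msh hav hm0 hmm)
    have h2 : ‖RS f m (unif a v m) (unif a v m)‖ ≤ M * (v - a) :=
      rs_bound hup (hMIcc le_rfl hv.2)
    have hstep : ‖F v‖ ≤ ‖F v - RS f m (unif a v m) (unif a v m)‖
        + ‖RS f m (unif a v m) (unif a v m)‖ := by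
      have := norm_add_le (F v - RS f m (unif a v m) (unif a v m))
        (RS f m (unif a v m) (unif a v m))
      rwa [sub_add_cancel] at this
    calc ‖F v‖ ≤ ‖F v - RS f m (unif a v m) (unif a v m)‖
          + ‖RS f m (unif a v m) (unif a v m)‖ := hstep
      _ ≤ ε + M * (v - a) := add_le_add (by rw [norm_sub_rev]; exact h1.le) h2
      _ = M * (v - a) + ε := by ring
  · -- a < u
    have hua : u ≠ a := ne_of_gt hau
    have hva : v ≠ a := ne_of_gt (lt_trans hau hlt)
    rw [Function.update_of_ne hva, Function.update_of_ne hua]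
    obtain ⟨δu, hδu0, Hu⟩ := (hri_iff f a u (F u)).mp (hF u hu) (ε/2) (by positivity)
    obtain ⟨δv, hδv0, Hv⟩ := (hri_iff f a v (F v)).mp (hF v hv) (ε/2) (by positivity)
    obtain ⟨m₁, hm₁0, hm₁m⟩ := exists_unif_nat hau (lt_min hδu0 hδv0)
    obtain ⟨m₂, hm₂0, hm₂m⟩ := exists_unif_nat hlt hδv0
    set U := unif a u m₁ with hUdef
    set Q := unif u v m₂ with hQdef
    have hUp : IsPart a u m₁ U U := unif_isPart hau hm₁0
    have hQp : IsPart u v m₂ Q Q := unif_isPart hlt hm₂0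
    have hUm := unif_msh hau hm₁0 hm₁m
    have hQm := unif_msh hlt hm₂0 hm₂m
    have hb1 : U m₁ = Q 0 := by rw [hUp.2.2.1, hQp.2.1]
    have hPp : IsPart a v (m₁+m₂) (catT m₁ U Q) (catX m₁ U Q) := cat_isPart hUp hQp
    have hPm : Msh δv (m₁+m₂) (catT m₁ U Q) :=
      cat_msh hb1 (fun i hi => lt_of_lt_of_le (hUm i hi) (min_le_right _ _)) hQm
    have h1 : ‖RS f m₁ U U + RS f m₂ Q Q - F v‖ < ε/2 := by
      have := Hv (m₁+m₂) _ _ hPp hPm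
      rwa [cat_RS f hb1] at this
    have h2 : ‖RS f m₁ U U - F u‖ < ε/2 :=
      Hu m₁ U U hUp (fun i hi => lt_of_lt_of_le (hUm i hi) (min_le_left _ _))
    have h3 : ‖RS f m₂ Q Q‖ ≤ M * (v - u) := rs_bound hQp (hMIcc hu.1 hv.2)
    have hdec : F v - F u = (F v - (RS f m₁ U U + RS f m₂ Q Q)) + RS f m₂ Q Q
        + (RS f m₁ U U - F u) := by abel
    have ha1 : ‖F v - (RS f m₁ U U + RS f m₂ Q Q)‖ < ε/2 := by
      rw [norm_sub_rev]; exact h1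
    calc ‖F v - F u‖
        = ‖(F v - (RS f m₁ U U + RS f m₂ Q Q)) + RS f m₂ Q Q + (RS f m₁ U U - F u)‖ := by
          rw [hdec]
      _ ≤ ‖F v - (RS f m₁ U U + RS f m₂ Q Q)‖ + ‖RS f m₂ Q Q‖ + ‖RS f m₁ U U - F u‖ :=
          norm_add₃_le
      _ ≤ M * (v - u) + ε := by linarith [ha1.le, h3, h2.le]

end Main
end RF


set_option maxHeartbeats 1000000 in
/-- Lemma A.3: if `f ∈ 𝓡_m([a,b],E)` and `F(t) = ∫_a^t f`, then `F ∈ 𝓡_m([a,b],E)` and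
`∫_a^b φ(t) F(t) dt = ∫_a^b (∫_t^b φ(s) ds) f(t) dt` for every `φ ∈ D⁻[a,b]`. -/
theorem riemann_fubini {E : Type*} [NormedAddCommGroup E] [NormedSpace ℝ E]
    {a b : ℝ} (hab : a < b) (f : ℝ → E)
    (hf : ∀ φ : ℝ → ℝ, MemDminus a b φ →
      ∃ I : E, HasRiemannIntegral (fun t => φ t • f t) a b I)
    (F : ℝ → E) (hF : ∀ t ∈ Set.Icc a b, HasRiemannIntegral f a t (F t)) :
    ∀ φ : ℝ → ℝ, MemDminus a b φ →
      ∃ J : E, HasRiemannIntegral (fun t => φ t • F t) a b J ∧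
        HasRiemannIntegral (fun t => (∫ s in t..b, φ s) • f t) a b J := by
  intro φ hφ
  have hba : 0 < b - a := sub_pos.mpr hab
  obtain ⟨Mφ, hMφ0, hMφ⟩ := RF.regulated_bounded hab hφ
  have hint : IntervalIntegrable φ volume a b := RF.regulated_integrable hab hφ
  have hψD : MemDminus a b (fun t => ∫ s in t..b, φ s) :=
    RF.psi_memD hab hint hMφ hMφ0
  obtain ⟨J, hJ⟩ := hf (fun t => ∫ s in t..b, φ s) hψD
  refine ⟨J, ?_, hJ⟩
  -- integrability of f itself, and a bound M for f
  have h1D : MemDminus a b (fun _ => (1:ℝ)) :=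
    ⟨fun x _ => tendsto_const_nhds, fun x _ => ⟨1, tendsto_const_nhds⟩⟩
  obtain ⟨Ib, hIb'⟩ := hf (fun _ => (1:ℝ)) h1D
  have hIb : HasRiemannIntegral f a b Ib := by
    have he : (fun t => (1:ℝ) • f t) = f := by funext t; rw [one_smul]
    rwa [he] at hIb'
  obtain ⟨M, hM0, hM⟩ := RF.hri_bounded hab hIb
  set ψ : ℝ → ℝ := fun t => ∫ s in t..b, φ s with hψdef
  set G : ℝ → E := Function.update F a 0 with hGdef
  have hGa : G a = 0 := Function.update_self a 0 F
  have hGF : ∀ x, x ≠ a → G x = F x := fun x hx => Function.update_of_ne hx 0 F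
  have hGlip : ∀ u ∈ Set.Icc a b, ∀ v ∈ Set.Icc a b, u ≤ v →
      ‖G v - G u‖ ≤ M * (v - u) := by
    rw [hGdef]
    exact RF.G_lip hab hM0 hM hF
  -- ψ facts
  have hψlip := RF.psi_lip hab hint hMφ
  have hψb : ψ b = 0 := intervalIntegral.integral_same
  have hψbd : ∀ t ∈ Set.Icc a b, |ψ t| ≤ Mφ * (b - a) := by
    intro t ht
    have h := hψlip t ht b ⟨hab.le, le_rfl⟩
    rw [intervalIntegral.integral_same, sub_zero] at h
    calc |ψ t| ≤ Mφ * |b - t| := h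
      _ ≤ Mφ * (b - a) := by
          apply mul_le_mul_of_nonneg_left _ hMφ0.le
          rw [abs_of_nonneg (by linarith [ht.2])]
          linarith [ht.1]
  -- transfer from G to F
  apply RF.hri_congr_update (f := fun t => φ t • G t)
    (fun x hx => by show φ x • G x = φ x • F x; rw [hGF x hx])
  rw [RF.hri_iff]
  intro ε hε
  -- constants
  set K : ℝ := Mφ*M*(b-a) + M*(b-a) + 2*(Mφ*(b-a)) + 1 with hKdef
  have hK1 : (1:ℝ) ≤ K := by
    have p1 : 0 ≤ Mφ*M*(b-a) := by positivity
    have p2 : 0 ≤ M*(b-a) := by positivity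
    have p3 : 0 ≤ 2*(Mφ*(b-a)) := by positivity
    rw [hKdef]; linarith
  have hK0 : (0:ℝ) < K := by linarith
  set ε₁ : ℝ := ε/(8*K) with hε₁def
  have hε₁0 : 0 < ε₁ := by rw [hε₁def]; positivity
  obtain ⟨δ₁, hδ₁0, H1⟩ := RF.key1 hab hφ hint hMφ0 hMφ hε₁0
  obtain ⟨δ₂, hδ₂0, H2⟩ := RF.key2 hab hIb hF hε₁0
  rw [RF.hri_iff] at hJ
  obtain ⟨δ₃, hδ₃0, H3⟩ := hJ ε₁ hε₁0
  refine ⟨min (min δ₁ δ₂) (min δ₃ (ε/(8*K))),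
    lt_min (lt_min hδ₁0 hδ₂0) (lt_min hδ₃0 (div_pos hε (by linarith))), ?_⟩
  intro n t ξ hp hm
  set δ : ℝ := min (min δ₁ δ₂) (min δ₃ (ε/(8*K))) with hδdef
  have hm1 : RF.Msh δ₁ n t := fun i hi =>
    lt_of_lt_of_le (hm i hi) (le_trans (min_le_left _ _) (min_le_left _ _))
  have hm2 : RF.Msh δ₂ n t := fun i hi =>
    lt_of_lt_of_le (hm i hi) (le_trans (min_le_left _ _) (min_le_right _ _))
  have hm3 : RF.Msh δ₃ n t := fun i hi =>
    lt_of_lt_of_le (hm i hi) (le_trans (min_le_right _ _) (min_le_left _ _))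
  have hmε : ∀ i < n, t (i+1) - t i ≤ ε/(8*K) := fun i hi =>
    le_trans (hm i hi).le (le_trans (min_le_right _ _) (min_le_right _ _))
  have hΔpos : ∀ i < n, (0:ℝ) < t (i+1) - t i := fun i hi => sub_pos.mpr (hp.2.2.2.1 i hi)
  -- the five sums
  set A : E := RF.RS (fun u => φ u • G u) n t ξ with hAdef
  set B : E := ∑ i ∈ Finset.range n, ((t (i+1) - t i) * φ (ξ i)) • G (t (i+1)) with hBdef
  set C : E := ∑ i ∈ Finset.range n, ψ (t i) • (G (t (i+1)) - G (t i)) with hCdef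
  set C' : E := ∑ i ∈ Finset.range n, ψ (t i) • ((t (i+1) - t i) • f (ξ i)) with hC'def
  set D : E := RF.RS (fun u => ψ u • f u) n t ξ with hDdef
  -- Step A-B
  have hABn : ‖A - B‖ ≤ Mφ*M*(b-a)*(ε/(8*K)) := by
    have hAB : A - B = ∑ i ∈ Finset.range n,
        ((t (i+1) - t i) * φ (ξ i)) • (G (ξ i) - G (t (i+1))) := by
      rw [hAdef, hBdef, RF.RS, ← Finset.sum_sub_distrib]
      apply Finset.sum_congr rfl
      intro i _
      rw [smul_sub, smul_smul]
    rw [hAB]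
    calc ‖∑ i ∈ Finset.range n, ((t (i+1) - t i) * φ (ξ i)) • (G (ξ i) - G (t (i+1)))‖
        ≤ ∑ i ∈ Finset.range n, ‖((t (i+1) - t i) * φ (ξ i)) • (G (ξ i) - G (t (i+1)))‖ :=
          norm_sum_le _ _
      _ ≤ ∑ i ∈ Finset.range n, (t (i+1) - t i) * (Mφ * (M * (ε/(8*K)))) := by
          apply Finset.sum_le_sum
          intro i hi
          have hi' := Finset.mem_range.mp hi
          have htag := hp.2.2.2.2 i hi'
          have h1 : |(t (i+1) - t i) * φ (ξ i)| ≤ (t (i+1) - t i) * Mφ := by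
            rw [abs_mul, abs_of_pos (hΔpos i hi')]
            exact mul_le_mul_of_nonneg_left (hMφ _ (RF.tag_mem hp hi')) (hΔpos i hi').le
          have h2 : ‖G (ξ i) - G (t (i+1))‖ ≤ M * (ε/(8*K)) := by
            rw [norm_sub_rev]
            calc ‖G (t (i+1)) - G (ξ i)‖ ≤ M * (t (i+1) - ξ i) :=
                  hGlip (ξ i) (RF.tag_mem hp hi') (t (i+1)) (RF.part_mem hp hi') htag.2
              _ ≤ M * (ε/(8*K)) := by
                  apply mul_le_mul_of_nonneg_left _ hM0.le
                  have := hmε i hi'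
                  linarith [htag.1]
          rw [norm_smul, Real.norm_eq_abs]
          calc |(t (i+1) - t i) * φ (ξ i)| * ‖G (ξ i) - G (t (i+1))‖
              ≤ ((t (i+1) - t i) * Mφ) * (M * (ε/(8*K))) := by
                apply mul_le_mul h1 h2 (norm_nonneg _)
                exact mul_nonneg (hΔpos i hi').le hMφ0.le
            _ = (t (i+1) - t i) * (Mφ * (M * (ε/(8*K)))) := by ring
      _ = (b - a) * (Mφ * (M * (ε/(8*K)))) := by rw [← Finset.sum_mul, RF.sum_diff hp]
      _ = Mφ*M*(b-a)*(ε/(8*K)) := by ring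
  -- Step B-C
  have hGt : ∀ i < n, G (t (i+1)) = ∑ j ∈ Finset.range (i+1), (G (t (j+1)) - G (t j)) := by
    intro i _
    rw [Finset.sum_range_sub (fun j => G (t j)), hp.2.1, hGa, sub_zero]
  have hBC : B = ∑ i ∈ Finset.range n,
      (∑ j ∈ Finset.Ico i n, ((t (j+1) - t j) * φ (ξ j))) • (G (t (i+1)) - G (t i)) := by
    have hswap := Finset.sum_Ico_Ico_comm 0 n
      (fun i j => ((t (j+1) - t j) * φ (ξ j)) • (G (t (i+1)) - G (t i)))
    have e1 : B = ∑ j ∈ Finset.Ico 0 n, ∑ i ∈ Finset.Ico 0 (j+1),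
        ((t (j+1) - t j) * φ (ξ j)) • (G (t (i+1)) - G (t i)) := by
      rw [hBdef, Finset.range_eq_Ico]
      apply Finset.sum_congr rfl
      intro j hj
      rw [← Finset.range_eq_Ico, ← Finset.smul_sum,
        ← hGt j (Finset.mem_range.mp (by rwa [Finset.range_eq_Ico]))]
    rw [e1, ← hswap, Finset.range_eq_Ico]
    apply Finset.sum_congr rfl
    intro i _
    rw [Finset.sum_smul]
  have hBCn : ‖B - C‖ ≤ ε₁ * (M * (b-a)) := by
    have hd : B - C = ∑ i ∈ Finset.range n,
        ((∑ j ∈ Finset.Ico i n, ((t (j+1) - t j) * φ (ξ j))) - ψ (t i)) •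
          (G (t (i+1)) - G (t i)) := by
      rw [hBC, hCdef, ← Finset.sum_sub_distrib]
      apply Finset.sum_congr rfl
      intro i _
      rw [sub_smul]
    have htail : ∀ i < n,
        |(∑ j ∈ Finset.Ico i n, ((t (j+1) - t j) * φ (ξ j))) - ψ (t i)| ≤ ε₁ := by
      intro i hi
      have hints : ∀ k ∈ Set.Ico i n, IntervalIntegrable φ volume (t k) (t (k+1)) := by
        intro k hk
        obtain ⟨hk1, hk2⟩ := hk
        apply hint.mono_set
        rw [Set.uIcc_subset_uIcc_iff_mem]
        constructor
        · rw [Set.uIcc_of_le hab.le]; exact RF.part_mem hp (by omega)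
        · rw [Set.uIcc_of_le hab.le]; exact RF.part_mem hp (by omega)
      have hψti : ψ (t i) = ∑ j ∈ Finset.Ico i n, ∫ s in t j..t (j+1), φ s := by
        rw [intervalIntegral.sum_integral_adjacent_intervals_Ico hi.le hints]
        rw [hψdef]
        simp only []
        rw [hp.2.2.1]
      rw [hψti, ← Finset.sum_sub_distrib]
      calc |∑ j ∈ Finset.Ico i n,
            ((t (j+1) - t j) * φ (ξ j) - ∫ s in t j..t (j+1), φ s)|
          ≤ ∑ j ∈ Finset.Ico i n,
            |(t (j+1) - t j) * φ (ξ j) - ∫ s in t j..t (j+1), φ s| :=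
            Finset.abs_sum_le_sum_abs _ _
        _ ≤ ∑ j ∈ Finset.range n,
            |(t (j+1) - t j) * φ (ξ j) - ∫ s in t j..t (j+1), φ s| := by
            apply Finset.sum_le_sum_of_subset_of_nonneg
            · intro j hj
              exact Finset.mem_range.mpr (Finset.mem_Ico.mp hj).2
            · intro j _ _
              exact abs_nonneg _
        _ ≤ ε₁ := H1 n t ξ hp hm1
    rw [hd]
    calc ‖∑ i ∈ Finset.range n,
          ((∑ j ∈ Finset.Ico i n, ((t (j+1) - t j) * φ (ξ j))) - ψ (t i)) •
            (G (t (i+1)) - G (t i))‖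
        ≤ ∑ i ∈ Finset.range n,
          ‖((∑ j ∈ Finset.Ico i n, ((t (j+1) - t j) * φ (ξ j))) - ψ (t i)) •
            (G (t (i+1)) - G (t i))‖ := norm_sum_le _ _
      _ ≤ ∑ i ∈ Finset.range n, ε₁ * (M * (t (i+1) - t i)) := by
          apply Finset.sum_le_sum
          intro i hi
          have hi' := Finset.mem_range.mp hi
          rw [norm_smul, Real.norm_eq_abs]
          have h2 : ‖G (t (i+1)) - G (t i)‖ ≤ M * (t (i+1) - t i) :=
            hGlip (t i) (RF.part_mem hp hi'.le) (t (i+1)) (RF.part_mem hp hi')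
              (hp.2.2.2.1 i hi').le
          apply mul_le_mul (htail i hi') h2 (norm_nonneg _) hε₁0.le
      _ = ε₁ * (M * (b-a)) := by
          rw [← Finset.mul_sum, ← Finset.mul_sum, RF.sum_diff hp]
  -- Step C-C' (Abel summation)
  set e : ℕ → E := fun j => (G (t (j+1)) - G (t j)) - (t (j+1) - t j) • f (ξ j) with hedef
  have hE : ∀ m, 0 < m → m ≤ n → ‖∑ j ∈ Finset.range m, e j‖ ≤ ε₁ := by
    intro m hm0 hmn
    have hsum : ∑ j ∈ Finset.range m, e j
        = G (t m) - ∑ j ∈ Finset.range m, (t (j+1) - t j) • f (ξ j) := by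
      rw [hedef, Finset.sum_sub_distrib, Finset.sum_range_sub (fun j => G (t j)),
        hp.2.1, hGa, sub_zero]
    have hta : t m ≠ a := by
      have := RF.part_strict_mono hp.2.2.2.1 hm0 hmn
      rw [hp.2.1] at this
      exact ne_of_gt this
    rw [hsum, hGdef, Function.update_of_ne hta]
    exact H2 n t ξ hp hm2 m hm0 hmn
  have hCC'n : ‖C - C'‖ ≤ ε₁ * (Mφ * (b-a)) + ε₁ * (Mφ * (b-a)) := by
    have hd : C - C' = ∑ j ∈ Finset.range n, ψ (t j) • e j := by
      rw [hCdef, hC'def, ← Finset.sum_sub_distrib]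
      apply Finset.sum_congr rfl
      intro j _
      simp only [hedef, smul_sub]
    rw [hd, Finset.sum_range_by_parts (fun j => ψ (t j)) e n]
    have hn1 : n - 1 + 1 = n := Nat.succ_pred_eq_of_pos hp.1
    have hb1 : ‖ψ (t (n-1)) • ∑ j ∈ Finset.range n, e j‖ ≤ ε₁ * (Mφ * (b-a)) := by
      rw [norm_smul, Real.norm_eq_abs]
      calc |ψ (t (n-1))| * ‖∑ j ∈ Finset.range n, e j‖
          ≤ (Mφ * (b-a)) * ε₁ := by
            apply mul_le_mul (hψbd _ (RF.part_mem hp (by omega))) (hE n hp.1 le_rfl)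
              (norm_nonneg _) (by positivity)
        _ = ε₁ * (Mφ * (b-a)) := by ring
    have hb2 : ‖∑ i ∈ Finset.range (n-1),
        (ψ (t (i+1)) - ψ (t i)) • ∑ j ∈ Finset.range (i+1), e j‖ ≤ ε₁ * (Mφ * (b-a)) := by
      calc ‖∑ i ∈ Finset.range (n-1),
            (ψ (t (i+1)) - ψ (t i)) • ∑ j ∈ Finset.range (i+1), e j‖
          ≤ ∑ i ∈ Finset.range (n-1),
            ‖(ψ (t (i+1)) - ψ (t i)) • ∑ j ∈ Finset.range (i+1), e j‖ := norm_sum_le _ _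
        _ ≤ ∑ i ∈ Finset.range (n-1), (Mφ * (t (i+1) - t i)) * ε₁ := by
            apply Finset.sum_le_sum
            intro i hi
            have hi' : i < n - 1 := Finset.mem_range.mp hi
            have hin : i < n := by omega
            have hi1n : i + 1 ≤ n := by omega
            rw [norm_smul, Real.norm_eq_abs]
            have h1 : |ψ (t (i+1)) - ψ (t i)| ≤ Mφ * (t (i+1) - t i) := by
              have h' : |ψ (t (i+1)) - ψ (t i)| ≤ Mφ * |t i - t (i+1)| :=
                hψlip (t (i+1)) (RF.part_mem hp hi1n) (t i) (RF.part_mem hp hin.le)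
              rwa [abs_sub_comm (t i), abs_of_pos (hΔpos i hin)] at h'
            exact mul_le_mul h1 (hE (i+1) (Nat.succ_pos i) hi1n) (norm_nonneg _)
              (mul_nonneg hMφ0.le (hΔpos i hin).le)
        _ = (∑ i ∈ Finset.range (n-1), Mφ * (t (i+1) - t i)) * ε₁ := by
            rw [Finset.sum_mul]
        _ ≤ (Mφ * (b-a)) * ε₁ := by
            apply mul_le_mul_of_nonneg_right _ hε₁0.le
            rw [← Finset.mul_sum]
            apply mul_le_mul_of_nonneg_left _ hMφ0.le
            calc ∑ i ∈ Finset.range (n-1), (t (i+1) - t i)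
                ≤ ∑ i ∈ Finset.range n, (t (i+1) - t i) := by
                  apply Finset.sum_le_sum_of_subset_of_nonneg
                  · apply Finset.range_subset_range.mpr; omega
                  · intro i hi _
                    exact (hΔpos i (Finset.mem_range.mp hi)).le
              _ = b - a := RF.sum_diff hp
        _ = ε₁ * (Mφ * (b-a)) := by ring
    calc ‖ψ (t (n-1)) • ∑ j ∈ Finset.range n, e j - ∑ i ∈ Finset.range (n-1),
          (ψ (t (i+1)) - ψ (t i)) • ∑ j ∈ Finset.range (i+1), e j‖
        ≤ ‖ψ (t (n-1)) • ∑ j ∈ Finset.range n, e j‖ + ‖∑ i ∈ Finset.range (n-1),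
          (ψ (t (i+1)) - ψ (t i)) • ∑ j ∈ Finset.range (i+1), e j‖ := norm_sub_le _ _
      _ ≤ ε₁ * (Mφ * (b-a)) + ε₁ * (Mφ * (b-a)) := add_le_add hb1 hb2
  -- Step C'-D
  have hC'Dn : ‖C' - D‖ ≤ Mφ*M*(b-a)*(ε/(8*K)) := by
    have hd : C' - D = ∑ j ∈ Finset.range n,
        ((ψ (t j) - ψ (ξ j)) * (t (j+1) - t j)) • f (ξ j) := by
      rw [hC'def, hDdef, RF.RS, ← Finset.sum_sub_distrib]
      apply Finset.sum_congr rfl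
      intro j _
      rw [smul_smul, smul_smul, ← sub_smul]
      congr 1
      ring
    rw [hd]
    calc ‖∑ j ∈ Finset.range n, ((ψ (t j) - ψ (ξ j)) * (t (j+1) - t j)) • f (ξ j)‖
        ≤ ∑ j ∈ Finset.range n, ‖((ψ (t j) - ψ (ξ j)) * (t (j+1) - t j)) • f (ξ j)‖ :=
          norm_sum_le _ _
      _ ≤ ∑ j ∈ Finset.range n, (Mφ * (ε/(8*K)) * (t (j+1) - t j)) * M := by
          apply Finset.sum_le_sum
          intro j hj
          have hj' := Finset.mem_range.mp hj
          have htag := hp.2.2.2.2 j hj'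
          rw [norm_smul, Real.norm_eq_abs]
          have h1 : |(ψ (t j) - ψ (ξ j)) * (t (j+1) - t j)|
              ≤ Mφ * (ε/(8*K)) * (t (j+1) - t j) := by
            rw [abs_mul, abs_of_pos (hΔpos j hj')]
            apply mul_le_mul_of_nonneg_right _ (hΔpos j hj').le
            have := hψlip (t j) (RF.part_mem hp hj'.le) (ξ j) (RF.tag_mem hp hj')
            calc |ψ (t j) - ψ (ξ j)| ≤ Mφ * |ξ j - t j| := this
              _ ≤ Mφ * (ε/(8*K)) := by
                  apply mul_le_mul_of_nonneg_left _ hMφ0.le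
                  rw [abs_of_nonneg (by linarith [htag.1])]
                  linarith [htag.2, hmε j hj']
          exact mul_le_mul h1 (hM _ (RF.tag_mem hp hj')) (norm_nonneg _)
            (mul_nonneg (mul_nonneg hMφ0.le (div_pos hε (by linarith)).le) (hΔpos j hj').le)
      _ = (∑ j ∈ Finset.range n, (t (j+1) - t j)) * (Mφ * (ε/(8*K)) * M) := by
          rw [Finset.sum_mul]
          apply Finset.sum_congr rfl
          intro j _
          ring
      _ = Mφ*M*(b-a)*(ε/(8*K)) := by rw [RF.sum_diff hp]; ring
  -- Step D-J
  have hDJ : ‖D - J‖ < ε₁ := H3 n t ξ hp hm3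
  -- assemble
  have hdec : A - J = (A - B) + ((B - C) + ((C - C') + ((C' - D) + (D - J)))) := by abel
  have htri : ‖A - J‖ ≤ ‖A-B‖ + (‖B-C‖ + (‖C-C'‖ + (‖C'-D‖ + ‖D-J‖))) := by
    rw [hdec]
    refine le_trans (norm_add_le _ _) (add_le_add_right ?_ _)
    refine le_trans (norm_add_le _ _) (add_le_add_right ?_ _)
    refine le_trans (norm_add_le _ _) (add_le_add_right ?_ _)
    exact norm_add_le _ _
  -- numeric conclusion
  have hc1 : Mφ*M*(b-a) ≤ K := by
    have p2 : 0 ≤ M*(b-a) := by positivity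
    have p3 : 0 ≤ 2*(Mφ*(b-a)) := by positivity
    rw [hKdef]; linarith
  have hc2 : M*(b-a) + 2*(Mφ*(b-a)) + 1 ≤ K := by
    have p1 : 0 ≤ Mφ*M*(b-a) := by positivity
    rw [hKdef]; linarith
  have hδK : Mφ*M*(b-a)*(ε/(8*K)) ≤ ε/8 := by
    have h8K : 0 < 8*K := by linarith
    calc Mφ*M*(b-a)*(ε/(8*K)) ≤ K*(ε/(8*K)) := by
          apply mul_le_mul_of_nonneg_right hc1 (by positivity)
      _ = ε/8 := by field_simp
  have hε₁K : ε₁ * (M*(b-a)) + (ε₁ * (Mφ * (b-a)) + ε₁ * (Mφ * (b-a))) + ε₁ ≤ ε/8 := by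
    have : ε₁ * (M*(b-a)) + (ε₁ * (Mφ * (b-a)) + ε₁ * (Mφ * (b-a))) + ε₁
        = ε₁ * (M*(b-a) + 2*(Mφ*(b-a)) + 1) := by ring
    rw [this, hε₁def]
    calc (ε/(8*K)) * (M*(b-a) + 2*(Mφ*(b-a)) + 1) ≤ (ε/(8*K)) * K := by
          apply mul_le_mul_of_nonneg_left hc2 (by positivity)
      _ = ε/8 := by field_simp
  linarith [htri, hABn, hBCn, hCC'n, hC'Dn, hDJ, hδK, hε₁K, hε]
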